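/- Let A be a standard graded algebra of dimension d over an infinite field k. Then the big reduction number br(A) = max{r_Q(A) : Q a minimal reduction of A} is finite; equivalently, the descending chain of varieties V_0 ⊇ V_1 ⊇ ... parameterizing failures of reductions stabilizes, and br(A) is the largest n with V_{n+1} ≠ V_n. -/

import Mathlib

set_option synthInstance.maxHeartbeats 1000000
set_option maxHeartbeats 1000000

open MvPolynomial

/-- The degree-`n` graded component of the standard graded algebra `A = k[x₁,...,xₘ]/I`. -/
noncomputable def gpiece (k : Type*) [Field k] (m : ℕ)
    (I : Ideal (MvPolynomial (Fin m) k)) (n : ℕ) :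
    Submodule k (MvPolynomial (Fin m) k ⧸ I) :=
  (homogeneousSubmodule (Fin m) k n).map (Ideal.Quotient.mkₐ k I).toLinearMap

/-- `Q_n = A_n`. -/
def gfull {k : Type*} [Field k] {m : ℕ} (I : Ideal (MvPolynomial (Fin m) k))
    (Q : Ideal (MvPolynomial (Fin m) k ⧸ I)) (n : ℕ) : Prop :=
  gpiece k m I n ≤ Q.restrictScalars k

/-- `Q` is a minimal reduction of `A = R/I` of dimension `d`: it is generated by `d`
linear forms and `Q_n = A_n` for all large `n`. -/
def isMinRed (k : Type*) [Field k] (m d : ℕ) (I : Ideal (MvPolynomial (Fin m) k))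
    (Q : Ideal (MvPolynomial (Fin m) k ⧸ I)) : Prop :=
  (∃ y : Fin d → MvPolynomial (Fin m) k,
      (∀ i, y i ∈ homogeneousSubmodule (Fin m) k 1) ∧
      Q = Ideal.span (Set.range fun i => Ideal.Quotient.mk I (y i))) ∧
  (∃ N : ℕ, ∀ n ≥ N, gfull I Q n)

/-- The reduction number `r_Q(A) = min{n : Q_{n+1} = A_{n+1}}`. -/
noncomputable def redNum {k : Type*} [Field k] {m : ℕ}
    (I : Ideal (MvPolynomial (Fin m) k))
    (Q : Ideal (MvPolynomial (Fin m) k ⧸ I)) : ℕ :=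
  sInf {n : ℕ | gfull I Q (n + 1)}

/-- The reduction number `r(A) = min{r_Q(A) : Q a minimal reduction of A}`,
for `A = R/I` of dimension `d`. -/
noncomputable def rAlg (k : Type*) [Field k] (m d : ℕ)
    (I : Ideal (MvPolynomial (Fin m) k)) : ℕ :=
  sInf {r : ℕ | ∃ Q, isMinRed k m d I Q ∧ redNum I Q = r}

/-- The ideal of `A = R/I` generated by the `d` linear forms with coefficient matrix `α`. -/
noncomputable def paramIdeal (k : Type*) [Field k] (m d : ℕ)
    (I : Ideal (MvPolynomial (Fin m) k)) (α : Fin d × Fin m → k) :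
    Ideal (MvPolynomial (Fin m) k ⧸ I) :=
  Ideal.span (Set.range fun i : Fin d =>
    Ideal.Quotient.mk I (∑ j : Fin m, C (α (i, j)) * X j))

namespace Stmt8Aux

variable {k : Type*} [Field k] {m : ℕ} {I : Ideal (MvPolynomial (Fin m) k)}

lemma mem_gpiece_iff {x : MvPolynomial (Fin m) k ⧸ I} {n : ℕ} :
    x ∈ gpiece k m I n ↔ ∃ f, f.IsHomogeneous n ∧ Ideal.Quotient.mk I f = x := by
  simp only [gpiece, Submodule.mem_map, AlgHom.toLinearMap_apply, Ideal.Quotient.mkₐ_eq_mk,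
    mem_homogeneousSubmodule]

lemma degree_sub_single {s : Fin m →₀ ℕ} {j : Fin m} (hj : s j ≠ 0) {n : ℕ}
    (hs : s.degree = n + 1) : (s - Finsupp.single j 1).degree = n := by
  have hle : Finsupp.single j 1 ≤ s := by
    rw [Finsupp.single_le_iff]; omega
  have hsplit : Finsupp.single j 1 + (s - Finsupp.single j 1) = s := add_tsub_cancel_of_le hle
  have hadd : (Finsupp.single j 1 + (s - Finsupp.single j 1)).degree
      = (Finsupp.single j 1).degree + (s - Finsupp.single j 1).degree := by
    simp [Finsupp.degree_eq_weight_one, map_add]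
  rw [hsplit] at hadd
  have hsing : (Finsupp.single j 1).degree = 1 := by
    simp [Finsupp.degree_single]
  omega

lemma mk_monomial_mem {s : Fin m →₀ ℕ} {n : ℕ} (hs : s.degree = n) (c : k) :
    Ideal.Quotient.mk I (monomial s c) ∈ gpiece k m I n :=
  mem_gpiece_iff.mpr ⟨monomial s c, isHomogeneous_monomial c hs, rfl⟩

lemma gfull_succ {Q : Ideal (MvPolynomial (Fin m) k ⧸ I)} {n : ℕ} (h : gfull I Q n) :
    gfull I Q (n + 1) := by
  intro x hx
  obtain ⟨f, hf, rfl⟩ := mem_gpiece_iff.mp hx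
  rw [f.as_sum, map_sum]
  refine Submodule.sum_mem _ fun s hs => ?_
  have hdeg : s.degree = n + 1 := by
    have := hf (mem_support_iff.mp hs)
    rwa [Finsupp.degree_eq_weight_one]
  have hs0 : s ≠ 0 := by
    intro h0
    rw [h0, map_zero] at hdeg
    omega
  obtain ⟨j, hj⟩ : ∃ j, s j ≠ 0 := by
    by_contra hc
    push_neg at hc
    exact hs0 (Finsupp.ext fun a => hc a)
  have hle : Finsupp.single j 1 ≤ s := by rw [Finsupp.single_le_iff]; omega
  have key : (X j : MvPolynomial (Fin m) k) * monomial (s - Finsupp.single j 1) (coeff s f)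
      = monomial s (coeff s f) := by
    rw [X, monomial_mul, one_mul, add_tsub_cancel_of_le hle]
  rw [← key, map_mul]
  exact Q.mul_mem_left _ (h (mk_monomial_mem (degree_sub_single hj hdeg) _))

lemma gfull_mono {Q : Ideal (MvPolynomial (Fin m) k ⧸ I)} {n n' : ℕ} (h : n ≤ n')
    (hg : gfull I Q n) : gfull I Q n' := by
  induction n' with
  | zero => exact Nat.le_zero.mp h ▸ hg
  | succ n'' ih =>
    rcases Nat.lt_or_ge n (n'' + 1) with hlt | hge
    · exact gfull_succ (ih (Nat.lt_succ_iff.mp hlt))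
    · exact (Nat.le_antisymm h hge) ▸ hg


lemma constantCoeff_span {d' : ℕ} {y : Fin d' → MvPolynomial (Fin m) k}
    (hy : ∀ i, (y i).IsHomogeneous 1) {g : MvPolynomial (Fin m) k}
    (hg : g ∈ Ideal.span (Set.range y)) : constantCoeff g = 0 := by
  refine Submodule.span_induction ?_ rfl ?_ ?_ hg
  · rintro x ⟨i, rfl⟩
    by_contra hc
    have := hy i (show coeff 0 (y i) ≠ 0 from hc)
    simp at this
  · intro a b _ _ ha hb; rw [map_add, ha, hb, add_zero]
  · intro a b _ hb; rw [smul_eq_mul, map_mul, hb, mul_zero]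

lemma not_gfull_zero (hI : ∀ f ∈ I, ∀ n : ℕ, homogeneousComponent n f ∈ I) (hI' : I ≠ ⊤)
    {d' : ℕ} {y : Fin d' → MvPolynomial (Fin m) k}
    (hy : ∀ i, (y i).IsHomogeneous 1) :
    ¬ gfull I (Ideal.span (Set.range fun i => Ideal.Quotient.mk I (y i))) 0 := by
  intro h
  have h1 : (1 : MvPolynomial (Fin m) k ⧸ I) ∈
      Ideal.span (Set.range fun i => Ideal.Quotient.mk I (y i)) :=
    h (mem_gpiece_iff.mpr ⟨1, isHomogeneous_one _ _, map_one _⟩)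
  have hr : (Set.range fun i => Ideal.Quotient.mk I (y i)) =
      (Ideal.Quotient.mk I) '' (Set.range y) := by
    ext x; simp
  rw [hr, ← Ideal.map_span] at h1
  obtain ⟨g, hg, hgeq⟩ := Ideal.mem_map_iff_of_surjective _ Ideal.Quotient.mk_surjective |>.mp h1
  have hsub : (1 : MvPolynomial (Fin m) k) - g ∈ I := by
    rw [← Ideal.Quotient.eq_zero_iff_mem, map_sub, hgeq, map_one, sub_self]
  have hc0 : constantCoeff g = 0 := constantCoeff_span hy hg
  have hcc : coeff 0 ((1 : MvPolynomial (Fin m) k) - g) = 1 := by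
    rw [coeff_sub, show (coeff 0 g : k) = constantCoeff g from rfl, hc0]
    simp
  have := hI _ hsub 0
  rw [homogeneousComponent_zero, hcc] at this
  exact hI' (Ideal.eq_top_iff_one I |>.mpr (by simpa using this))
-- decomposition of a linear form
lemma exists_single_of_degree_one {s : Fin m →₀ ℕ} (hs : s.degree = 1) :
    ∃ j, s = Finsupp.single j 1 := by
  have hne : s ≠ 0 := by
    intro h0; rw [h0, map_zero] at hs; omega
  obtain ⟨j, hj⟩ : ∃ j, s j ≠ 0 := by
    by_contra hc; push_neg at hc; exact hne (Finsupp.ext fun a => hc a)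
  have hjs : j ∈ s.support := Finsupp.mem_support_iff.mpr hj
  have hle : s j ≤ s.degree := Finset.single_le_sum (f := fun i => s i) (fun _ _ => Nat.zero_le _) hjs
  have hsj : s j = 1 := by omega
  refine ⟨j, ?_⟩
  have hsub : s.support ⊆ {j} := by
    intro i hi
    by_contra hij
    simp only [Finset.mem_singleton] at hij
    have hi' : s i ≠ 0 := Finsupp.mem_support_iff.mp hi
    have hsubs : ({j, i} : Finset (Fin m)) ⊆ s.support := by
      intro x hx; simp only [Finset.mem_insert, Finset.mem_singleton] at hx
      rcases hx with rfl | rfl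
      · exact hjs
      · exact hi
    have h2 : s j + s i ≤ s.degree := by
      calc s j + s i = ∑ x ∈ ({j, i} : Finset (Fin m)), s x := by
            rw [Finset.sum_insert (by simpa using Ne.symm hij), Finset.sum_singleton]
        _ ≤ ∑ x ∈ s.support, s x := Finset.sum_le_sum_of_subset hsubs
        _ = s.degree := rfl
    omega
  have := (Finsupp.support_subset_singleton (a := j)).mp hsub
  rwa [hsj] at this

lemma linear_decomp {p : MvPolynomial (Fin m) k} (hp : p.IsHomogeneous 1) :
    p = ∑ j : Fin m, C (coeff (Finsupp.single j 1) p) * X j := by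
  have hXj : ∀ j, (C (coeff (Finsupp.single j 1) p) * X j : MvPolynomial (Fin m) k)
      = monomial (Finsupp.single j 1) (coeff (Finsupp.single j 1) p) := by
    intro j; rw [X, C_mul_monomial, mul_one]
  rw [Finset.sum_congr rfl fun j _ => hXj j]
  have hinj : Function.Injective fun j : Fin m => Finsupp.single j 1 :=
    fun a b hab => Finsupp.single_left_injective one_ne_zero hab
  have himg : (∑ j : Fin m, monomial (Finsupp.single j 1) (coeff (Finsupp.single j 1) p))
      = ∑ s ∈ Finset.univ.image (fun j : Fin m => Finsupp.single j 1),
          monomial s (coeff s p) :=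
    (Finset.sum_image (f := fun s => monomial s (coeff s p))
      (g := fun j : Fin m => Finsupp.single j 1) (fun x _ y _ h => hinj h)).symm
  rw [himg]
  conv_lhs => rw [p.as_sum]
  refine Finset.sum_subset ?_ ?_
  · intro s hs
    have : s.degree = 1 := by
      have := hp (mem_support_iff.mp hs); rwa [Finsupp.degree_eq_weight_one]
    obtain ⟨j, rfl⟩ := exists_single_of_degree_one this
    exact Finset.mem_image.mpr ⟨j, Finset.mem_univ j, rfl⟩
  · intro s _ hs
    rw [notMem_support_iff.mp hs, map_zero]

-- homogeneous component of product with a linear form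
lemma homogComp_mul_linear {g ℓ : MvPolynomial (Fin m) k} (hl : ℓ.IsHomogeneous 1) (j : ℕ) :
    homogeneousComponent (j + 1) (g * ℓ) = homogeneousComponent j g * ℓ := by
  conv_lhs => rw [← g.sum_homogeneousComponent]
  rw [Finset.sum_mul, map_sum]
  have hterm : ∀ i, homogeneousComponent (j + 1) (homogeneousComponent i g * ℓ)
      = if i = j then homogeneousComponent i g * ℓ else 0 := by
    intro i
    have hmem : homogeneousComponent i g * ℓ ∈ homogeneousSubmodule (Fin m) k (i + 1) :=
      ((homogeneousComponent_isHomogeneous i g).mul hl)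
    rw [homogeneousComponent_of_mem hmem]
    by_cases h : i = j
    · subst h; simp
    · rw [if_neg (by omega), if_neg h]
  rw [Finset.sum_congr rfl fun i _ => hterm i]
  by_cases hj : j ∈ Finset.range (g.totalDegree + 1)
  · rw [Finset.sum_ite_eq' _ j, if_pos hj]
  · rw [Finset.sum_ite_eq' _ j, if_neg hj]
    have : homogeneousComponent j g = 0 :=
      homogeneousComponent_eq_zero _ _ (by simp at hj; omega)
    rw [this, zero_mul]
variable {d : ℕ}

lemma I_ne_top (hd : ringKrullDim (MvPolynomial (Fin m) k ⧸ I) = d) : I ≠ ⊤ := by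
  intro hItop
  haveI : Subsingleton (MvPolynomial (Fin m) k ⧸ I) :=
    Ideal.Quotient.subsingleton_iff.mpr hItop
  rw [ringKrullDim_eq_bot_of_subsingleton] at hd
  exact absurd hd.symm (by simp)

lemma minred_iff (hI : ∀ f ∈ I, ∀ n : ℕ, homogeneousComponent n f ∈ I) (hI' : I ≠ ⊤)
    {Q : Ideal (MvPolynomial (Fin m) k ⧸ I)} {y : Fin d → MvPolynomial (Fin m) k}
    (hy : ∀ i, (y i).IsHomogeneous 1)
    (hQ : Q = Ideal.span (Set.range fun i => Ideal.Quotient.mk I (y i))) (n : ℕ) :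
    (isMinRed k m d I Q ∧ redNum I Q = n) ↔ gfull I Q (n + 1) ∧ ¬ gfull I Q n := by
  have hys : ∀ i, y i ∈ homogeneousSubmodule (Fin m) k 1 := hy
  constructor
  · rintro ⟨⟨-, N, hN⟩, hr⟩
    simp only [redNum] at hr
    have hne : {j : ℕ | gfull I Q (j + 1)}.Nonempty := ⟨N, hN (N + 1) (Nat.le_succ N)⟩
    have hmem : gfull I Q (n + 1) := by
      have := Nat.sInf_mem hne
      rwa [hr] at this
    refine ⟨hmem, ?_⟩
    cases n with
    | zero =>
      rw [hQ]
      exact not_gfull_zero hI hI' hy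
    | succ j =>
      have hlt : j < sInf {j : ℕ | gfull I Q (j + 1)} := by omega
      exact Nat.notMem_of_lt_sInf hlt
  · rintro ⟨h1, h2⟩
    refine ⟨⟨⟨y, hys, hQ⟩, ⟨n + 1, fun n' hn' => gfull_mono hn' h1⟩⟩, ?_⟩
    simp only [redNum]
    refine le_antisymm (Nat.sInf_le h1) (le_csInf ⟨n, h1⟩ ?_)
    intro j hj
    by_contra hc
    push_neg at hc
    exact h2 (gfull_mono (by omega) hj)

/-- The linear form with coefficients `α i ·`. -/
noncomputable def linP (α : Fin d × Fin m → k) (i : Fin d) : MvPolynomial (Fin m) k :=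
  ∑ j : Fin m, C (α (i, j)) * X j

lemma linP_hom (α : Fin d × Fin m → k) (i : Fin d) : (linP α i).IsHomogeneous 1 := by
  refine IsHomogeneous.sum _ _ _ fun j _ => ?_
  simpa using (isHomogeneous_C (σ := Fin m) (α (i, j))).mul (isHomogeneous_X k j)

lemma paramIdeal_eq (α : Fin d × Fin m → k) :
    paramIdeal k m d I α = Ideal.span (Set.range fun i => Ideal.Quotient.mk I (linP α i)) := rfl

lemma isMinRed_param {Q : Ideal (MvPolynomial (Fin m) k ⧸ I)} (h : isMinRed k m d I Q) :
    ∃ α : Fin d × Fin m → k, Q = paramIdeal k m d I α := by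
  obtain ⟨⟨y, hy, hQ⟩, -⟩ := h
  refine ⟨fun p => coeff (Finsupp.single p.2 1) (y p.1), ?_⟩
  rw [hQ, paramIdeal_eq]
  have hfun : (fun i => Ideal.Quotient.mk I (y i))
      = fun i => Ideal.Quotient.mk I
          (linP (fun p : Fin d × Fin m => coeff (Finsupp.single p.2 1) (y p.1)) i) := by
    funext i
    congr 1
    exact linear_decomp (hy i)
  rw [hfun]

lemma mk_smul (c : k) (q : MvPolynomial (Fin m) k) :
    Ideal.Quotient.mk I (c • q) = c • Ideal.Quotient.mk I q := by
  rw [← Ideal.Quotient.mkₐ_eq_mk k I]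
  exact map_smul (Ideal.Quotient.mkₐ k I) c q

variable {j : ℕ}

/-- The fixed vectors `x_jv * monomial s` in the degree `j+1` piece. -/
noncomputable def uvec (I : Ideal (MvPolynomial (Fin m) k))
    (t : Fin m × {s : Fin m →₀ ℕ // s.degree = j}) : gpiece k m I (j + 1) :=
  ⟨Ideal.Quotient.mk I (X t.1 * monomial t.2.1 1),
    mem_gpiece_iff.mpr ⟨X t.1 * monomial t.2.1 1,
      (by simpa [add_comm] using (isHomogeneous_X k t.1).mul (isHomogeneous_monomial (1:k) t.2.2)),
      rfl⟩⟩

/-- The vectors `ℓ_i(α) * monomial s` in the degree `j+1` piece. -/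
noncomputable def vvec (I : Ideal (MvPolynomial (Fin m) k)) (α : Fin d × Fin m → k)
    (t : Fin d × {s : Fin m →₀ ℕ // s.degree = j}) : gpiece k m I (j + 1) :=
  ⟨Ideal.Quotient.mk I (linP α t.1 * monomial t.2.1 1),
    mem_gpiece_iff.mpr ⟨linP α t.1 * monomial t.2.1 1,
      (by simpa [add_comm] using (linP_hom α t.1).mul (isHomogeneous_monomial (1:k) t.2.2)), rfl⟩⟩

lemma vvec_decomp (α : Fin d × Fin m → k) (t : Fin d × {s : Fin m →₀ ℕ // s.degree = j}) :
    vvec I α t = ∑ jv : Fin m, α (t.1, jv) • uvec I (jv, t.2) := by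
  apply Subtype.ext
  push_cast [Submodule.coe_sum]
  simp only [vvec, uvec, SetLike.mk_smul_mk, linP]
  rw [Finset.sum_mul, map_sum]
  refine Finset.sum_congr rfl fun jv _ => ?_
  rw [← mk_smul, smul_eq_C_mul, mul_assoc]

lemma gfull_iff_span (hI : ∀ f ∈ I, ∀ n : ℕ, homogeneousComponent n f ∈ I)
    (α : Fin d × Fin m → k) :
    gfull I (paramIdeal k m d I α) (j + 1) ↔
      Submodule.span k (Set.range (vvec I α (j := j))) = ⊤ := by
  constructor
  · intro hfull
    rw [eq_top_iff]
    rintro ⟨x, hx⟩ -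
    obtain ⟨f, hf, rfl⟩ := mem_gpiece_iff.mp hx
    have hxQ : Ideal.Quotient.mk I f ∈ paramIdeal k m d I α := hfull hx
    rw [paramIdeal_eq] at hxQ
    obtain ⟨c, hc⟩ := Ideal.mem_span_range_iff_exists_fun.mp hxQ
    choose g hg using fun i => Ideal.Quotient.mk_surjective (I := I) (c i)
    have hsub : f - ∑ i, g i * linP α i ∈ I := by
      rw [← Ideal.Quotient.eq]
      rw [map_sum]
      rw [show (∑ i, Ideal.Quotient.mk I (g i * linP α i)) = ∑ i, c i * Ideal.Quotient.mk I (linP α i) from Finset.sum_congr rfl fun i _ => by rw [map_mul, hg]]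
      exact hc.symm
    have hcomp := hI _ hsub (j + 1)
    rw [map_sub, homogeneousComponent_of_mem ((mem_homogeneousSubmodule _ _).mpr hf), if_pos rfl] at hcomp
    have hsum : homogeneousComponent (j + 1) (∑ i, g i * linP α i)
        = ∑ i, homogeneousComponent j (g i) * linP α i := by
      rw [map_sum]
      exact Finset.sum_congr rfl fun i _ => homogComp_mul_linear (linP_hom α i) j
    rw [hsum] at hcomp
    have hmk : Ideal.Quotient.mk I f
        = ∑ i, Ideal.Quotient.mk I (homogeneousComponent j (g i) * linP α i) := by
      rw [← map_sum]
      exact Ideal.Quotient.eq.mpr hcomp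
    have hval : Ideal.Quotient.mk I f ∈
        Submodule.map (gpiece k m I (j + 1)).subtype
          (Submodule.span k (Set.range (vvec I α (j := j)))) := by
      rw [Submodule.map_span, hmk]
      refine Submodule.sum_mem _ fun i _ => ?_
      have hh : (homogeneousComponent j (g i)).IsHomogeneous j :=
        homogeneousComponent_isHomogeneous j (g i)
      rw [(homogeneousComponent j (g i)).as_sum, Finset.sum_mul, map_sum]
      refine Submodule.sum_mem _ fun s hs => ?_
      have hsdeg : s.degree = j := by
        have := hh (mem_support_iff.mp hs)
        rwa [Finsupp.degree_eq_weight_one]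
      have heq : monomial s (coeff s (homogeneousComponent j (g i))) * linP α i
          = (coeff s (homogeneousComponent j (g i))) • (linP α i * monomial s 1) := by
        rw [smul_eq_C_mul]
        rw [show (C (coeff s (homogeneousComponent j (g i))) * (linP α i * monomial s 1))
            = (C (coeff s (homogeneousComponent j (g i))) * monomial s 1) * linP α i by ring]
        rw [C_mul_monomial, mul_one]
      rw [heq, mk_smul]
      refine Submodule.smul_mem _ _ (Submodule.subset_span ?_)
      exact ⟨vvec I α (i, ⟨s, hsdeg⟩), ⟨(i, ⟨s, hsdeg⟩), rfl⟩, rfl⟩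
    obtain ⟨w, hw, hweq⟩ := hval
    have hweq' : w = ⟨Ideal.Quotient.mk I f, hx⟩ := Subtype.ext hweq
    rwa [hweq'] at hw
  · intro hsp x hx
    have hx' : (⟨x, hx⟩ : gpiece k m I (j + 1)) ∈
        Submodule.span k (Set.range (vvec I α (j := j))) := by rw [hsp]; trivial
    have hmem := Submodule.mem_map_of_mem (f := (gpiece k m I (j + 1)).subtype) hx'
    rw [Submodule.map_span] at hmem
    have hle : Submodule.span k ((gpiece k m I (j + 1)).subtype '' Set.range (vvec I α (j := j)))
        ≤ (paramIdeal k m d I α).restrictScalars k := by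
      rw [Submodule.span_le]
      rintro _ ⟨w, ⟨t, rfl⟩, rfl⟩
      show Ideal.Quotient.mk I (linP α t.1 * monomial t.2.1 1) ∈ paramIdeal k m d I α
      rw [map_mul, paramIdeal_eq]
      exact Ideal.mul_mem_right _ _ (Ideal.subset_span ⟨t.1, rfl⟩)
    exact hle hmem

lemma finDim_homog (n : ℕ) : FiniteDimensional k (homogeneousSubmodule (Fin m) k n) := by
  haveI : Module.Finite k (restrictTotalDegree (Fin m) k n) := inferInstance
  refine Submodule.finiteDimensional_of_le (S₂ := restrictTotalDegree (Fin m) k n) (fun p hp => ?_)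
  rw [mem_restrictTotalDegree]
  exact IsHomogeneous.totalDegree_le hp

lemma finDim_gpiece (n : ℕ) : FiniteDimensional k (gpiece k m I n) := by
  haveI := finDim_homog (k := k) (m := m) n
  have : FiniteDimensional k
      ((homogeneousSubmodule (Fin m) k n).map (Ideal.Quotient.mkₐ k I).toLinearMap) :=
    Module.Finite.map _ _
  exact this

lemma exists_witness (hI : ∀ f ∈ I, ∀ n : ℕ, homogeneousComponent n f ∈ I) (hI' : I ≠ ⊤)
    (n : ℕ) (α0 : Fin d × Fin m → k) (h0 : gfull I (paramIdeal k m d I α0) n) :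
    ∃ p : MvPolynomial (Fin d × Fin m) k, (∃ s, p.IsHomogeneous s) ∧
      (∀ α : Fin d × Fin m → k, ¬ gfull I (paramIdeal k m d I α) n → eval α p = 0) ∧
      eval α0 p ≠ 0 := by
  classical
  cases n with
  | zero =>
    exfalso
    have := not_gfull_zero hI hI' (linP_hom α0)
    rw [← paramIdeal_eq] at this
    exact this h0
  | succ j =>
    haveI := finDim_gpiece (k := k) (m := m) (I := I) (j + 1)
    have hsp := (gfull_iff_span hI α0).mp h0
    obtain ⟨b, hbsub, hbspan, hbind⟩ := exists_linearIndependent k (Set.range (vvec I α0 (j := j)))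
    rw [hsp] at hbspan
    haveI : Fintype b := hbind.setFinite.fintype
    let B : Module.Basis b k (gpiece k m I (j + 1)) := Module.Basis.mk hbind (by rw [Subtype.range_coe, hbspan])
    have hpick : ∀ c : b, ∃ t, vvec I α0 t = (c : gpiece k m I (j + 1)) := fun c => hbsub c.2
    choose t ht using hpick
    set P : Matrix b b (MvPolynomial (Fin d × Fin m) k) := fun r c =>
      ∑ jv : Fin m, MvPolynomial.C ((B.repr (uvec I (jv, (t c).2))) r)
        * MvPolynomial.X ((t c).1, jv) with hP
    have hPhom : ∀ r c, (P r c).IsHomogeneous 1 := by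
      intro r c
      refine IsHomogeneous.sum _ _ _ fun jv _ => ?_
      simpa using (isHomogeneous_C (σ := Fin d × Fin m)
        ((B.repr (uvec I (jv, (t c).2))) r)).mul (isHomogeneous_X k ((t c).1, jv))
    have evalP : ∀ (α : Fin d × Fin m → k) (r c : b),
        eval α (P r c) = B.repr (vvec I α (t c)) r := by
      intro α r c
      rw [hP]
      simp only [map_sum, map_mul, eval_C, eval_X]
      rw [vvec_decomp, map_sum, Finsupp.finset_sum_apply]
      refine Finset.sum_congr rfl fun jv _ => ?_
      rw [map_smul, Finsupp.smul_apply, smul_eq_mul, mul_comm]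
    have hmap : ∀ α : Fin d × Fin m → k,
        P.map (eval α) = B.toMatrix fun c => vvec I α (t c) := by
      intro α
      ext r c
      rw [Matrix.map_apply, evalP, Module.Basis.toMatrix_apply]
    refine ⟨P.det, ⟨Fintype.card b, ?_⟩, ?_, ?_⟩
    · rw [← mem_homogeneousSubmodule, Matrix.det_apply]
      refine Submodule.sum_mem _ fun σ _ => ?_
      have hprod : (∏ c, P (σ c) c) ∈
          homogeneousSubmodule (Fin d × Fin m) k (Fintype.card b) := by
        have := IsHomogeneous.prod Finset.univ (fun c : b => P (σ c) c) (fun _ => 1)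
          (fun c _ => hPhom (σ c) c)
        simpa using this
      rcases Int.units_eq_one_or (Equiv.Perm.sign σ) with h | h <;> rw [h]
      · simpa using hprod
      · have : ((-1 : ℤˣ) • (∏ c, P (σ c) c)) = -(∏ c, P (σ c) c) := by
          simp [Units.smul_def]
        rw [this]
        exact Submodule.neg_mem _ hprod
    · intro α hα
      by_contra hne
      rw [RingHom.map_det, RingHom.mapMatrix_apply, hmap] at hne
      have hunit : IsUnit (B.det fun c => vvec I α (t c)) := by
        rw [Module.Basis.det_apply]
        exact isUnit_iff_ne_zero.mpr hne
      obtain ⟨-, hspan2⟩ := (Module.Basis.is_basis_iff_det B).mpr hunit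
      apply hα
      rw [gfull_iff_span hI]
      rw [eq_top_iff, ← hspan2]
      apply Submodule.span_mono
      rintro _ ⟨c, rfl⟩
      exact ⟨t c, rfl⟩
    · rw [RingHom.map_det, RingHom.mapMatrix_apply, hmap]
      have hBc : (fun c => vvec I α0 (t c)) = fun c : b => B c := by
        funext c
        rw [ht c, Module.Basis.mk_apply]
      rw [hBc, show (fun c : b => B c) = ⇑B from rfl, Module.Basis.toMatrix_self, Matrix.det_one]
      exact one_ne_zero

/-- The variety parameterizing failures at degree `n`. -/
def Vp (I : Ideal (MvPolynomial (Fin m) k)) (n : ℕ) : Set (Fin d × Fin m → k) :=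
  {α | ¬ gfull I (paramIdeal k m d I α) n}

/-- All homogeneous polynomials vanishing on `Vp I n`. -/
def Jset (I : Ideal (MvPolynomial (Fin m) k)) (d n : ℕ) :
    Set (MvPolynomial (Fin d × Fin m) k) :=
  {p | (∃ s, p.IsHomogeneous s) ∧ ∀ α ∈ Vp (d := d) I n, eval α p = 0}

lemma Vp_antitone (n : ℕ) : Vp (d := d) I (n + 1) ⊆ Vp (d := d) I n :=
  fun _ hα hg => hα (gfull_succ hg)

lemma Jset_mono (n : ℕ) : Jset I d n ⊆ Jset I d (n + 1) :=
  fun p hp => ⟨hp.1, fun α hα => hp.2 α (Vp_antitone n hα)⟩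

lemma Z_eq_Vp (hI : ∀ f ∈ I, ∀ n : ℕ, homogeneousComponent n f ∈ I) (hI' : I ≠ ⊤) (n : ℕ) :
    {α : Fin d × Fin m → k | ∀ p ∈ Jset I d n, eval α p = 0} = Vp (d := d) I n := by
  apply Set.Subset.antisymm
  · intro α hα
    by_contra hV
    have hg : gfull I (paramIdeal k m d I α) n := not_not.mp hV
    obtain ⟨p, hp1, hp2, hp3⟩ := exists_witness hI hI' n α hg
    exact hp3 (hα p ⟨hp1, hp2⟩)
  · intro α hα p hp
    exact hp.2 α hα

lemma zlocus_span (S : Set (MvPolynomial (Fin d × Fin m) k)) (α : Fin d × Fin m → k) :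
    (∀ p ∈ Ideal.span S, eval α p = 0) ↔ ∀ p ∈ S, eval α p = 0 := by
  constructor
  · exact fun h p hp => h p (Ideal.subset_span hp)
  · intro h p hp
    refine Submodule.span_induction (fun q hq => h q hq) (map_zero _) ?_ ?_ hp
    · intro a b _ _ ha hb; rw [map_add, ha, hb, add_zero]
    · intro a b _ hb; rw [smul_eq_mul, map_mul, hb, mul_zero]

lemma param_iff (hI : ∀ f ∈ I, ∀ n : ℕ, homogeneousComponent n f ∈ I) (hI' : I ≠ ⊤)
    (α : Fin d × Fin m → k) (n : ℕ) :
    (isMinRed k m d I (paramIdeal k m d I α) ∧ redNum I (paramIdeal k m d I α) = n) ↔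
      (α ∈ Vp (d := d) I n ∧ α ∉ Vp (d := d) I (n + 1)) := by
  rw [minred_iff hI hI' (linP_hom α) (paramIdeal_eq α) n]
  constructor
  · rintro ⟨h1, h2⟩; exact ⟨h2, not_not_intro h1⟩
  · rintro ⟨h1, h2⟩; exact ⟨not_not.mp h2, h1⟩

lemma sets_eq (hI : ∀ f ∈ I, ∀ n : ℕ, homogeneousComponent n f ∈ I) (hI' : I ≠ ⊤) :
    {r : ℕ | ∃ Q, isMinRed k m d I Q ∧ redNum I Q = r} =
      {n : ℕ | Vp (d := d) I (n + 1) ≠ Vp (d := d) I n} := by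
  ext n
  simp only [Set.mem_setOf_eq]
  constructor
  · rintro ⟨Q, hQ, hr⟩
    obtain ⟨α, rfl⟩ := isMinRed_param hQ
    have h := (param_iff hI hI' α n).mp ⟨hQ, hr⟩
    intro heq
    exact h.2 (by rw [heq]; exact h.1)
  · intro hne
    obtain ⟨α, hα1, hα2⟩ : ∃ α, α ∈ Vp (d := d) I n ∧ α ∉ Vp (d := d) I (n + 1) := by
      by_contra hc; push_neg at hc
      exact hne (Set.Subset.antisymm (Vp_antitone n) (fun α hα => hc α hα))
    exact ⟨paramIdeal k m d I α, (param_iff hI hI' α n).mpr ⟨hα1, hα2⟩⟩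

lemma stab (hI : ∀ f ∈ I, ∀ n : ℕ, homogeneousComponent n f ∈ I) (hI' : I ≠ ⊤) :
    ∃ N : ℕ, ∀ n ≥ N, Vp (d := d) I (n + 1) = Vp (d := d) I n := by
  haveI : IsNoetherianRing (MvPolynomial (Fin d × Fin m) k) := inferInstance
  have hmono : Monotone (fun n => Ideal.span (Jset I d n)) :=
    monotone_nat_of_le_succ fun n => Ideal.span_mono (Jset_mono n)
  obtain ⟨N, hN⟩ := monotone_stabilizes_iff_noetherian.mpr inferInstance
    ⟨fun n => Ideal.span (Jset I d n), hmono⟩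
  refine ⟨N, fun n hn => ?_⟩
  have h1 : Ideal.span (Jset I d (n + 1)) = Ideal.span (Jset I d n) := by
    have ha := hN n hn
    have hb := hN (n + 1) (by omega)
    simp only [OrderHom.coe_mk] at ha hb
    rw [← ha, ← hb]
  rw [← Z_eq_Vp hI hI' (n + 1), ← Z_eq_Vp hI hI' n]
  ext α
  simp only [Set.mem_setOf_eq]
  rw [← zlocus_span, ← zlocus_span, h1]

end Stmt8Aux

/-- the big reduction number `br(A) = max{r_Q(A) : Q minimal reduction}`
is finite; equivalently, the descending chain of varieties `V₀ ⊇ V₁ ⊇ ⋯`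
(parameterizing reductions as in the previous statements) stabilizes, and `br(A)` is
the largest `n` with `V_{n+1} ≠ V_n`. -/
theorem stmt8 (k : Type*) [Field k] [Infinite k] (m d : ℕ)
    (I : Ideal (MvPolynomial (Fin m) k))
    (hI : ∀ f ∈ I, ∀ n : ℕ, homogeneousComponent n f ∈ I)
    (hd : ringKrullDim (MvPolynomial (Fin m) k ⧸ I) = d) :
    BddAbove {r : ℕ | ∃ Q, isMinRed k m d I Q ∧ redNum I Q = r} ∧
    ∃ J : ℕ → Set (MvPolynomial (Fin d × Fin m) k),
      (∀ n, ∀ p ∈ J n, ∃ s : ℕ, p.IsHomogeneous s) ∧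
      (∀ n, {α : Fin d × Fin m → k | ∀ p ∈ J (n + 1), eval α p = 0} ⊆
            {α : Fin d × Fin m → k | ∀ p ∈ J n, eval α p = 0}) ∧
      (∀ (α : Fin d × Fin m → k), α ≠ 0 → ∀ n : ℕ,
        (isMinRed k m d I (paramIdeal k m d I α) ∧
            redNum I (paramIdeal k m d I α) = n) ↔
          ((∀ p ∈ J n, eval α p = 0) ∧ ¬ (∀ p ∈ J (n + 1), eval α p = 0))) ∧
      (∃ N : ℕ, ∀ n ≥ N,
        {α : Fin d × Fin m → k | ∀ p ∈ J (n + 1), eval α p = 0} =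
          {α : Fin d × Fin m → k | ∀ p ∈ J n, eval α p = 0}) ∧
      sSup {r : ℕ | ∃ Q, isMinRed k m d I Q ∧ redNum I Q = r} =
        sSup {n : ℕ |
          {α : Fin d × Fin m → k | ∀ p ∈ J (n + 1), eval α p = 0} ≠
            {α : Fin d × Fin m → k | ∀ p ∈ J n, eval α p = 0}} := by
  classical
  have hI' : I ≠ ⊤ := Stmt8Aux.I_ne_top hd
  obtain ⟨N, hN⟩ := Stmt8Aux.stab (d := d) hI hI'
  have hZ : ∀ n, {α : Fin d × Fin m → k | ∀ p ∈ Stmt8Aux.Jset I d n, eval α p = 0}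
      = Stmt8Aux.Vp (d := d) I n := fun n => Stmt8Aux.Z_eq_Vp hI hI' n
  have hsets := Stmt8Aux.sets_eq (d := d) hI hI'
  constructor
  · refine ⟨N, fun r hr => ?_⟩
    rw [hsets] at hr
    by_contra hlt
    push_neg at hlt
    exact hr (hN r (by omega))
  · refine ⟨Stmt8Aux.Jset I d, fun n p hp => hp.1, ?_, ?_, ⟨N, fun n hn => ?_⟩, ?_⟩
    · intro n α hα
      rw [Set.mem_setOf_eq] at hα ⊢
      have h1 := Set.ext_iff.mp (hZ n) α
      have h2 := Set.ext_iff.mp (hZ (n + 1)) α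
      simp only [Set.mem_setOf_eq] at h1 h2
      exact h1.mpr (Stmt8Aux.Vp_antitone n (h2.mp hα))
    · intro α _ n
      rw [Stmt8Aux.param_iff hI hI' α n]
      have h1 := Set.ext_iff.mp (hZ n) α
      have h2 := Set.ext_iff.mp (hZ (n + 1)) α
      simp only [Set.mem_setOf_eq] at h1 h2
      rw [← h1, ← h2]
    · rw [hZ, hZ]
      exact hN n hn
    · have hss : {n : ℕ | {α : Fin d × Fin m → k | ∀ p ∈ Stmt8Aux.Jset I d (n + 1), eval α p = 0}
          ≠ {α : Fin d × Fin m → k | ∀ p ∈ Stmt8Aux.Jset I d n, eval α p = 0}}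
          = {n : ℕ | Stmt8Aux.Vp (d := d) I (n + 1) ≠ Stmt8Aux.Vp (d := d) I n} := by
        ext n
        simp only [Set.mem_setOf_eq, hZ]
      rw [hss, hsets]
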